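/- Let G be a connected simple claw-free graph on an even number of vertices. Then G has a perfect matching. -/

import Mathlib

/-- A graph is claw-free if no vertex has three pairwise non-adjacent
neighbors. -/
def ClawFree {V : Type*} (G : SimpleGraph V) : Prop :=
  ¬ ∃ v a b c : V, a ≠ b ∧ a ≠ c ∧ b ≠ c ∧
    G.Adj v a ∧ G.Adj v b ∧ G.Adj v c ∧
    ¬ G.Adj a b ∧ ¬ G.Adj a c ∧ ¬ G.Adj b c

open SimpleGraph

section Helpers

variable {V : Type*} {G : SimpleGraph V} {t : Set V}


lemma reach_induce_of_walk : ∀ {x y : V} (p : G.Walk x y) (hs : ∀ z ∈ p.support, z ∈ t),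
    (G.induce t).Reachable ⟨x, hs x p.start_mem_support⟩ ⟨y, hs y p.end_mem_support⟩ := by
  intro x y p
  induction p with
  | nil => intro hs; rfl
  | @cons x z y h p ih =>
      intro hs
      have hz : z ∈ t := hs z (by simp)
      have h1 : (G.induce t).Adj ⟨x, hs x (by simp)⟩ ⟨z, hz⟩ := by
        simpa [SimpleGraph.comap_adj] using h
      exact h1.reachable.trans (ih (fun w hw => hs w (by simp [hw])))

lemma exists_pred_of_dist {u x : V} (h : 0 < G.dist u x) (hr : G.Reachable u x) :
    ∃ y, G.Adj y x ∧ G.dist u y + 1 = G.dist u x := by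
  obtain ⟨p, hp⟩ := hr.exists_walk_length_eq_dist
  cases hq : p.reverse with
  | nil =>
      exfalso
      have h2 := congrArg SimpleGraph.Walk.length hq
      rw [SimpleGraph.Walk.length_reverse] at h2
      simp only [SimpleGraph.Walk.length_nil] at h2
      omega
  | @cons _ z _ h' q =>
      refine ⟨z, h'.symm, ?_⟩
      have hlen : q.length + 1 = G.dist u x := by
        have h2 := congrArg SimpleGraph.Walk.length hq
        rw [SimpleGraph.Walk.length_reverse] at h2
        simp only [SimpleGraph.Walk.length_cons] at h2
        omega
      have h1 : G.dist u z ≤ q.length := by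
        simpa using G.dist_le q.reverse
      obtain ⟨r, hr2⟩ :=
        (Reachable.mono le_rfl ⟨q.reverse⟩ : G.Reachable u z).exists_walk_length_eq_dist
      have h2 : G.dist u x ≤ G.dist u z + 1 := by
        have := G.dist_le (r.concat h'.symm)
        rwa [SimpleGraph.Walk.length_concat, hr2] at this
      omega

lemma exists_walk_support_reach {u : V} (hu : u ∈ t) :
    ∀ (a c : ↥t) (q : (G.induce t).Walk a c),
      (G.induce t).Reachable ⟨u, hu⟩ a →
      ∃ p : G.Walk a.1 c.1, ∀ z ∈ p.support,
        ∃ hz : z ∈ t, (G.induce t).Reachable ⟨u, hu⟩ ⟨z, hz⟩ := by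
  intro a c q
  induction q with
  | nil =>
      intro ha
      exact ⟨SimpleGraph.Walk.nil, by rintro z hz; simp at hz; subst hz; exact ⟨_, ha⟩⟩
  | @cons a e c h q ih =>
      intro ha
      obtain ⟨p, hp⟩ := ih (ha.trans h.reachable)
      refine ⟨SimpleGraph.Walk.cons (by simpa using h) p, ?_⟩
      intro z hz
      rw [SimpleGraph.Walk.support_cons, List.mem_cons] at hz
      rcases hz with rfl | hz
      · exact ⟨a.2, ha⟩
      · exact hp z hz

lemma connected_of_forall_reach {W : Type*} {G' : SimpleGraph W} (a : W)
    (h : ∀ z, G'.Reachable a z) : G'.Connected := by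
  haveI : Nonempty W := ⟨a⟩
  exact ⟨fun x y => (h x).symm.trans (h y)⟩

lemma exists_good_edge [Fintype V] [DecidableEq V]
    (hconn : G.Connected) (hclaw : ClawFree G) (hcard : 3 ≤ Fintype.card V) :
    ∃ v w : V, G.Adj v w ∧ (G.induce ({v, w}ᶜ : Set V)).Connected := by
  classical
  by_cases hcomp : ∀ x y : V, x ≠ y → G.Adj x y
  · -- complete graph
    obtain ⟨v, w, hvw⟩ := Fintype.exists_pair_of_one_lt_card (α := V) (by omega)
    refine ⟨v, w, hcomp v w hvw, ?_⟩
    have hz : ∃ z : V, z ≠ v ∧ z ≠ w := by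
      by_contra hno
      push_neg at hno
      have hsub : (Finset.univ : Finset V) ⊆ {v, w} := by
        intro z _
        rcases (em (z = v)) with rfl | hzz
        · simp
        · simp [hno z hzz]
      have h1 := Finset.card_le_card hsub
      simp only [Finset.card_univ] at h1
      have h2 : ({v, w} : Finset V).card ≤ 2 := (Finset.card_insert_le _ _).trans (by simp)
      omega
    obtain ⟨z, hz1, hz2⟩ := hz
    have hzs : z ∈ ({v, w}ᶜ : Set V) := by simp [hz1, hz2]
    refine connected_of_forall_reach ⟨z, hzs⟩ (fun x => ?_)
    rcases em (x = ⟨z, hzs⟩) with rfl | hne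
    · rfl
    · have hadj : G.Adj z x.1 := hcomp _ _ (fun hh => hne (Subtype.ext hh.symm))
      exact ((by simpa using hadj : (G.induce ({v, w}ᶜ : Set V)).Adj ⟨z, hzs⟩ x)).reachable
  · push_neg at hcomp
    obtain ⟨u, x1, hux1, hnadj⟩ := hcomp
    obtain ⟨v, -, hv⟩ := Finset.exists_max_image (Finset.univ : Finset V) (fun x => G.dist u x)
      ⟨u, Finset.mem_univ u⟩
    have hvmax : ∀ x : V, G.dist u x ≤ G.dist u v := fun x => hv x (Finset.mem_univ x)
    set d := G.dist u v with hd
    have hd2 : 2 ≤ d := by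
      have h1 : 1 ≤ G.dist u x1 := hconn.pos_dist_of_ne hux1
      have h2 : G.dist u x1 ≠ 1 := fun hh =>
        hnadj ((SimpleGraph.dist_eq_one_iff_adj (G := G)).mp hh)
      have := hvmax x1
      omega
    obtain ⟨w, hwv, hww⟩ := exists_pred_of_dist (by omega) (hconn u v)
    have hduw : G.dist u w + 1 = d := hww
    have hvw : v ≠ w := (hwv.ne).symm
    have huv : u ≠ v := by
      intro hh; rw [← hh] at hd; simp [SimpleGraph.dist_self] at hd; omega
    have huw : u ≠ w := by
      intro hh; rw [← hh] at hduw; simp [SimpleGraph.dist_self] at hduw; omega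
    set s : Set V := {v, w}ᶜ with hs
    have mem_s : ∀ {z : V}, z ∈ s ↔ z ≠ v ∧ z ≠ w := by
      intro z; simp [hs, and_comm]
    have hu_s : u ∈ s := mem_s.mpr ⟨huv, huw⟩
    by_cases hHconn : (G.induce s).Connected
    · exact ⟨v, w, hwv.symm, hHconn⟩
    set U : Set V := {x | ∃ hx : x ∈ s, (G.induce s).Reachable ⟨u, hu_s⟩ ⟨x, hx⟩} with hU
    have hUs : ∀ {x}, x ∈ U → x ∈ s := fun hx => hx.1
    have huU : u ∈ U := ⟨hu_s, Reachable.refl _⟩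
    have hlow : ∀ k x, G.dist u x = k → x ≠ w → G.dist u x < d → x ∈ U := by
      intro k
      induction k using Nat.strong_induction_on with
      | _ k ih =>
        intro x hk hxw hxd
        rcases em (x = u) with rfl | hxu
        · exact huU
        · have hpos : 0 < G.dist u x := hconn.pos_dist_of_ne (Ne.symm hxu)
          obtain ⟨y, hyx, hyd⟩ := exists_pred_of_dist hpos (hconn u x)
          have hyw : y ≠ w := by
            intro hh; rw [hh] at hyd; omega
          have hyU : y ∈ U := ih (G.dist u y) (by omega) y rfl hyw (by omega)
          have hxs : x ∈ s := mem_s.mpr ⟨by intro hh; rw [hh] at hxd; omega, hxw⟩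
          exact ⟨hxs, hyU.2.trans
            (by simpa using hyx : (G.induce s).Adj ⟨y, hyU.1⟩ ⟨x, hxs⟩).reachable⟩
    obtain ⟨b, hbw, hbd⟩ := exists_pred_of_dist (by omega) (hconn u w)
    have hbU : b ∈ U := hlow _ b rfl (hbw.ne) (by omega)
    have hadjw : ∀ x, x ∈ s → x ∉ U → G.Adj w x := by
      intro x hxs hxU
      obtain ⟨p, hp⟩ := (hconn u x).exists_walk_length_eq_dist
      by_cases hvmem : v ∈ p.support
      · exfalso
        have h1 : d ≤ (p.takeUntil v hvmem).length := G.dist_le _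
        have h2 : 1 ≤ (p.dropUntil v hvmem).length := by
          have := G.dist_le (p.dropUntil v hvmem)
          have hvx : 0 < G.dist v x := hconn.pos_dist_of_ne (fun hh => (mem_s.mp hxs).1 hh.symm)
          omega
        have h3 : (p.takeUntil v hvmem).length + (p.dropUntil v hvmem).length = p.length := by
          rw [← SimpleGraph.Walk.length_append, p.take_spec hvmem]
        have h4 : p.length ≤ d := by rw [hp]; exact hvmax x
        omega
      by_cases hwmem : w ∈ p.support
      · have h1 : d - 1 ≤ (p.takeUntil w hwmem).length := by
          have := G.dist_le (p.takeUntil w hwmem); omega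
        have h3 : (p.takeUntil w hwmem).length + (p.dropUntil w hwmem).length = p.length := by
          rw [← SimpleGraph.Walk.length_append, p.take_spec hwmem]
        have h4 : p.length ≤ d := by rw [hp]; exact hvmax x
        have h5 : G.dist w x ≤ 1 := by
          have := G.dist_le (p.dropUntil w hwmem); omega
        have h6 : G.dist w x ≠ 0 := by
          have := hconn.pos_dist_of_ne (fun hh => (mem_s.mp hxs).2 hh.symm)
          omega
        exact (SimpleGraph.dist_eq_one_iff_adj (G := G)).mp (by omega)
      · exfalso
        apply hxU
        have hsupp : ∀ z ∈ p.support, z ∈ s := by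
          intro z hz
          refine mem_s.mpr ⟨?_, ?_⟩
          · rintro rfl; exact hvmem hz
          · rintro rfl; exact hwmem hz
        exact ⟨hxs, reach_induce_of_walk p hsupp⟩
    have hnoedge : ∀ x y, x ∈ U → y ∈ s → y ∉ U → ¬ G.Adj x y := by
      intro x y hxU hys hyU hadj
      exact hyU ⟨hys, hxU.2.trans
        (by simpa using hadj : (G.induce s).Adj ⟨x, hxU.1⟩ ⟨y, hys⟩).reachable⟩
    have hBne : ∃ x, x ∈ s ∧ x ∉ U := by
      by_contra hno
      push_neg at hno
      exact hHconn (connected_of_forall_reach ⟨u, hu_s⟩ (fun z => (hno z.1 z.2).2))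
    have hclique : ∀ x y, x ∈ s → x ∉ U → y ∈ s → y ∉ U → x ≠ y → G.Adj x y := by
      intro x y hxs hxU hys hyU hxy
      by_contra hnxy
      exact hclaw ⟨w, x, y, b, hxy,
        (fun hh => hxU (hh ▸ hbU)), (fun hh => hyU (hh ▸ hbU)),
        hadjw x hxs hxU, hadjw y hys hyU, hbw.symm,
        hnxy,
        (fun hh => hnoedge b x hbU hxs hxU hh.symm),
        (fun hh => hnoedge b y hbU hys hyU hh.symm)⟩
    have hUwalk : ∀ x, x ∈ U → ∃ p : G.Walk u x, ∀ z ∈ p.support, z ∈ U := by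
      intro x hx
      obtain ⟨q⟩ := hx.2
      obtain ⟨p, hp⟩ := exists_walk_support_reach hu_s ⟨u, hu_s⟩ ⟨x, hx.1⟩ q (Reachable.refl _)
      exact ⟨p, fun z hz => hp z hz⟩
    by_cases hα : ∃ x, x ∈ s ∧ x ∉ U ∧ G.Adj v x
    · obtain ⟨x, hxs, hxU, hvx⟩ := hα
      refine ⟨v, x, hvx, ?_⟩
      set s' : Set V := {v, x}ᶜ with hs'
      have mem_s' : ∀ {z : V}, z ∈ s' ↔ z ≠ v ∧ z ≠ x := by
        intro z; simp [hs', and_comm]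
      have hu_s' : u ∈ s' := mem_s'.mpr ⟨huv, fun hh => hxU (hh ▸ huU)⟩
      have hUs' : ∀ {z}, z ∈ U → z ∈ s' := by
        intro z hz
        exact mem_s'.mpr ⟨(mem_s.mp hz.1).1, fun hh => hxU (hh ▸ hz)⟩
      have hw_s' : w ∈ s' := mem_s'.mpr ⟨hvw.symm, fun hh => (mem_s.mp hxs).2 hh.symm⟩
      have reachU : ∀ z (hz : z ∈ U), (G.induce s').Reachable ⟨u, hu_s'⟩ ⟨z, hUs' hz⟩ := by
        intro z hz
        obtain ⟨p, hp⟩ := hUwalk z hz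
        exact reach_induce_of_walk p (fun y hy => hUs' (hp y hy))
      have reachW : (G.induce s').Reachable ⟨u, hu_s'⟩ ⟨w, hw_s'⟩ :=
        (reachU b hbU).trans
          (by simpa using hbw : (G.induce s').Adj ⟨b, hUs' hbU⟩ ⟨w, hw_s'⟩).reachable
      refine connected_of_forall_reach ⟨u, hu_s'⟩ (fun z => ?_)
      obtain ⟨zv, zs'⟩ := z
      have hz' := mem_s'.mp zs'
      rcases em (zv = w) with rfl | hzw
      · exact reachW
      · have hzs : zv ∈ s := mem_s.mpr ⟨hz'.1, hzw⟩
        rcases em (zv ∈ U) with hzU | hzU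
        · exact reachU zv hzU
        · exact reachW.trans (by simpa using hadjw zv hzs hzU :
            (G.induce s').Adj ⟨w, hw_s'⟩ ⟨zv, zs'⟩).reachable
    · push_neg at hα
      obtain ⟨x0, hx0s, hx0U⟩ := hBne
      have hvb : G.Adj v b := by
        by_contra hnvb
        refine hclaw ⟨w, v, x0, b, ?_, ?_, ?_, hwv, hadjw x0 hx0s hx0U, hbw.symm,
          hα x0 hx0s hx0U, hnvb, ?_⟩
        · exact fun hh => (mem_s.mp hx0s).1 hh.symm
        · exact fun hh => (mem_s.mp (hUs hbU)).1 hh.symm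
        · exact fun hh => hx0U (hh ▸ hbU)
        · exact fun hh => hnoedge b x0 hbU hx0s hx0U hh.symm
      by_cases hβ : ∃ y, y ∈ s ∧ y ∉ U ∧ y ≠ x0
      · obtain ⟨y, hys, hyU, hyx0⟩ := hβ
        have hxy : G.Adj x0 y := hclique x0 y hx0s hx0U hys hyU (Ne.symm hyx0)
        refine ⟨x0, y, hxy, ?_⟩
        set s' : Set V := {x0, y}ᶜ with hs'
        have mem_s' : ∀ {z : V}, z ∈ s' ↔ z ≠ x0 ∧ z ≠ y := by
          intro z; simp [hs', and_comm]
        have hu_s' : u ∈ s' := mem_s'.mpr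
          ⟨fun hh => hx0U (hh ▸ huU), fun hh => hyU (hh ▸ huU)⟩
        have hUs' : ∀ {z}, z ∈ U → z ∈ s' := by
          intro z hz
          exact mem_s'.mpr ⟨fun hh => hx0U (hh ▸ hz), fun hh => hyU (hh ▸ hz)⟩
        have hw_s' : w ∈ s' := mem_s'.mpr
          ⟨fun hh => (mem_s.mp hx0s).2 hh.symm, fun hh => (mem_s.mp hys).2 hh.symm⟩
        have hv_s' : v ∈ s' := mem_s'.mpr
          ⟨fun hh => (mem_s.mp hx0s).1 hh.symm, fun hh => (mem_s.mp hys).1 hh.symm⟩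
        have reachU : ∀ z (hz : z ∈ U), (G.induce s').Reachable ⟨u, hu_s'⟩ ⟨z, hUs' hz⟩ := by
          intro z hz
          obtain ⟨p, hp⟩ := hUwalk z hz
          exact reach_induce_of_walk p (fun a ha => hUs' (hp a ha))
        have reachW : (G.induce s').Reachable ⟨u, hu_s'⟩ ⟨w, hw_s'⟩ :=
          (reachU b hbU).trans
            (by simpa using hbw : (G.induce s').Adj ⟨b, hUs' hbU⟩ ⟨w, hw_s'⟩).reachable
        refine connected_of_forall_reach ⟨u, hu_s'⟩ (fun z => ?_)
        obtain ⟨zv, zs'⟩ := z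
        have hz' := mem_s'.mp zs'
        rcases em (zv = w) with rfl | hzw
        · exact reachW
        rcases em (zv = v) with rfl | hzv
        · exact reachW.trans
            (by simpa using hwv : (G.induce s').Adj ⟨w, hw_s'⟩ ⟨zv, zs'⟩).reachable
        · have hzs : zv ∈ s := mem_s.mpr ⟨hzv, hzw⟩
          rcases em (zv ∈ U) with hzU | hzU
          · exact reachU zv hzU
          · exact reachW.trans (by simpa using hadjw zv hzs hzU :
              (G.induce s').Adj ⟨w, hw_s'⟩ ⟨zv, zs'⟩).reachable
      · push_neg at hβ
        refine ⟨w, x0, hadjw x0 hx0s hx0U, ?_⟩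
        set s' : Set V := {w, x0}ᶜ with hs'
        have mem_s' : ∀ {z : V}, z ∈ s' ↔ z ≠ w ∧ z ≠ x0 := by
          intro z; simp [hs', and_comm]
        have hu_s' : u ∈ s' := mem_s'.mpr ⟨huw, fun hh => hx0U (hh ▸ huU)⟩
        have hUs' : ∀ {z}, z ∈ U → z ∈ s' := by
          intro z hz
          exact mem_s'.mpr ⟨(mem_s.mp hz.1).2, fun hh => hx0U (hh ▸ hz)⟩
        have hv_s' : v ∈ s' := mem_s'.mpr ⟨hvw, fun hh => (mem_s.mp hx0s).1 hh.symm⟩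
        have reachU : ∀ z (hz : z ∈ U), (G.induce s').Reachable ⟨u, hu_s'⟩ ⟨z, hUs' hz⟩ := by
          intro z hz
          obtain ⟨p, hp⟩ := hUwalk z hz
          exact reach_induce_of_walk p (fun a ha => hUs' (hp a ha))
        refine connected_of_forall_reach ⟨u, hu_s'⟩ (fun z => ?_)
        obtain ⟨zv, zs'⟩ := z
        have hz' := mem_s'.mp zs'
        rcases em (zv = v) with rfl | hzv
        · exact (reachU b hbU).trans
            (by simpa using hvb.symm : (G.induce s').Adj ⟨b, hUs' hbU⟩ ⟨zv, zs'⟩).reachable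
        · have hzs : zv ∈ s := mem_s.mpr ⟨hzv, hz'.1⟩
          rcases em (zv ∈ U) with hzU | hzU
          · exact reachU zv hzU
          · exact absurd (hβ zv hzs hzU) hz'.2

end Helpers

lemma clawfree_induce {V : Type*} {G : SimpleGraph V} (t : Set V) (h : ClawFree G) :
    ClawFree (G.induce t) := by
  rintro ⟨v, a, b, c, hab, hac, hbc, h1, h2, h3, h4, h5, h6⟩
  refine h ⟨v.1, a.1, b.1, c.1, fun hh => hab (Subtype.ext hh), fun hh => hac (Subtype.ext hh),
    fun hh => hbc (Subtype.ext hh), by simpa using h1, by simpa using h2, by simpa using h3,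
    fun hh => h4 (by simpa using hh), fun hh => h5 (by simpa using hh),
    fun hh => h6 (by simpa using hh)⟩

universe u

lemma sumner_aux : ∀ (n : ℕ) (V : Type u) [Fintype V] [DecidableEq V] (G : SimpleGraph V),
    Fintype.card V = n → G.Connected → ClawFree G → Even (Fintype.card V) →
    ∃ M : G.Subgraph, M.IsPerfectMatching := by
  intro n
  induction n using Nat.strong_induction_on with
  | _ n ih =>
    intro V _ _ G hn hconn hclaw heven
    classical
    haveI : Nonempty V := hconn.nonempty
    have hpos : 0 < Fintype.card V := Fintype.card_pos
    by_cases hsmall : Fintype.card V < 3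
    · -- card = 2
      have hc2 : Fintype.card V = 2 := by
        obtain ⟨k, hk⟩ := heven; omega
      obtain ⟨v, w, hvw, hall⟩ := (Nat.card_eq_two_iff (α := V)).mp (by rw [Nat.card_eq_fintype_card, hc2])
      have hcov : ∀ z : V, z = v ∨ z = w := by
        intro z
        have : z ∈ ({v, w} : Set V) := hall ▸ Set.mem_univ z
        simpa using this
      obtain ⟨p⟩ := hconn v w
      have hadj : G.Adj v w := by
        cases p with
        | nil => exact absurd rfl hvw
        | @cons _ z _ h q =>
            rcases hcov z with rfl | rfl
            · exact absurd rfl h.ne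
            · exact h
      refine ⟨G.subgraphOfAdj hadj, Subgraph.IsMatching.subgraphOfAdj hadj, ?_⟩
      intro z
      rcases hcov z with rfl | rfl <;> simp
    · push_neg at hsmall
      obtain ⟨v, w, hadj, hK⟩ := exists_good_edge hconn hclaw hsmall
      have hvw : v ≠ w := hadj.ne
      set t : Set V := {v, w}ᶜ with ht
      have mem_t : ∀ {z : V}, z ∈ t ↔ z ≠ v ∧ z ≠ w := by
        intro z; simp [ht, and_comm]
      have hcardt : Fintype.card ↥t = n - 2 := by
        have h1 : Fintype.card ↥({v, w} : Set V) = 2 := by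
          rw [← Nat.card_eq_fintype_card, Nat.card_coe_set_eq, Set.ncard_pair hvw]
        have h2 : Fintype.card ↥t = Fintype.card V - Fintype.card ↥({v, w} : Set V) :=
          Fintype.card_compl_set _
        omega
      have hevent : Even (Fintype.card ↥t) := by
        obtain ⟨k, hk⟩ := heven
        rw [hcardt]
        exact ⟨k - 1, by omega⟩
      obtain ⟨M', hM'⟩ := ih (n - 2) (by omega) ↥t (G.induce t) hcardt hK
        (clawfree_induce t hclaw) hevent
      -- build the matching on G
      refine ⟨⟨Set.univ,
        fun a b => (a = v ∧ b = w) ∨ (a = w ∧ b = v) ∨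
          ∃ (ha : a ∈ t) (hb : b ∈ t), M'.Adj ⟨a, ha⟩ ⟨b, hb⟩,
        ?_, ?_, ?_⟩, ?_, fun a => Set.mem_univ a⟩
      · rintro a b (⟨rfl, rfl⟩ | ⟨rfl, rfl⟩ | ⟨ha, hb, hM⟩)
        · exact hadj
        · exact hadj.symm
        · simpa using M'.adj_sub hM
      · intro a b _; exact Set.mem_univ a
      · constructor; rintro a b (⟨rfl, rfl⟩ | ⟨rfl, rfl⟩ | ⟨ha, hb, hM⟩)
        · exact Or.inr (Or.inl ⟨rfl, rfl⟩)
        · exact Or.inl ⟨rfl, rfl⟩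
        · exact Or.inr (Or.inr ⟨hb, ha, hM.symm⟩)
      · -- IsMatching
        intro a _
        rcases em (a = v) with rfl | hav
        · refine ⟨w, Or.inl ⟨rfl, rfl⟩, ?_⟩
          rintro y (⟨-, rfl⟩ | ⟨h1, -⟩ | ⟨h1, -, -⟩)
          · rfl
          · exact absurd h1 hvw
          · exact absurd (mem_t.mp h1).1 (by simp)
        rcases em (a = w) with rfl | haw
        · refine ⟨v, Or.inr (Or.inl ⟨rfl, rfl⟩), ?_⟩
          rintro y (⟨h1, -⟩ | ⟨-, rfl⟩ | ⟨h1, -, -⟩)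
          · exact absurd h1 hvw.symm
          · rfl
          · exact absurd (mem_t.mp h1).2 (by simp)
        · have hat : a ∈ t := mem_t.mpr ⟨hav, haw⟩
          obtain ⟨b', hb'1, hb'2⟩ := hM'.1 (hM'.2 ⟨a, hat⟩)
          refine ⟨b'.1, Or.inr (Or.inr ⟨hat, b'.2, by simpa using hb'1⟩), ?_⟩
          rintro y (⟨h1, -⟩ | ⟨h1, -⟩ | ⟨h1, hy, hM⟩)
          · exact absurd h1 hav
          · exact absurd h1 haw
          · have := hb'2 ⟨y, hy⟩ (by simpa using hM)
            exact congrArg Subtype.val this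

/-- Sumner–Las Vergnas: a connected claw-free graph of even order has a
perfect matching. -/
theorem stmt12 {V : Type*} [Fintype V] [DecidableEq V] (G : SimpleGraph V)
    [DecidableRel G.Adj] (hconn : G.Connected) (hclaw : ClawFree G)
    (heven : Even (Fintype.card V)) :
    ∃ M : G.Subgraph, M.IsPerfectMatching :=
  sumner_aux (Fintype.card V) V G rfl hconn hclaw heven
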